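/- arXiv:2311.10667 — 3 statements merged into one kernel-verified Lean document; each statement's English description precedes it below -/
import Mathlib

section
/- Let v ∈ ℂⁿ be nonzero, c ∈ ℂⁿ, and let F(z) = z·v + c. For any constant (1,1)-form φ = Σ_{k,ℓ} ξ_{k,ℓ} dz_k ∧ dz̄_ℓ on ℂⁿ with complex coefficients ξ_{k,ℓ}, one has ∫_{D_R} F*φ = −2iπR² Σ_{k,ℓ} v_k ξ_{k,ℓ} v̄_ℓ for every R > 0. Consequently the normalized integral (∫_{D_R} F*φ) / (∫_{D_R} F*ω) equals −2i Σ_{k,ℓ} v_k ξ_{k,ℓ} v̄_ℓ / ‖v‖², independent of R and c. -/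
open MeasureTheory Complex

/-- For the affine curve `F(z) = z·v + c` and a constant `(1,1)`-form
`φ = Σ ξ_{kℓ} dz_k ∧ dz̄_ℓ`, the pullback `F*φ` has density
`Σ ξ_{kℓ} F_k'(z) conj(F_ℓ'(z)) · (−2i)` with respect to Lebesgue measure
(since `dz ∧ dz̄ = −2i dx ∧ dy`), and its integral over `D_R` equals
`−2iπR² Σ v_k ξ_{kℓ} v̄_ℓ`.  Consequently the area-normalized integral equals
`−2i Σ v_k ξ_{kℓ} v̄_ℓ / ‖v‖²`, independent of `R` and `c`. -/
theorem stmt5 (n : ℕ) (v c : EuclideanSpace ℂ (Fin n)) (hv : v ≠ 0) (R : ℝ) (hR : 0 < R)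
    (ξ : Fin n → Fin n → ℂ)
    (F : ℂ → EuclideanSpace ℂ (Fin n)) (hF : ∀ z j, F z j = z * v j + c j) :
    (∫ z in Metric.ball (0 : ℂ) R,
        ∑ k, ∑ l, ξ k l * (fderiv ℂ F z 1 k) * (starRingEnd ℂ) (fderiv ℂ F z 1 l) * (-2 * I))
      = -2 * I * Real.pi * (R : ℂ) ^ 2 * ∑ k, ∑ l, v k * ξ k l * (starRingEnd ℂ) (v l) ∧
    (∫ z in Metric.ball (0 : ℂ) R,
        ∑ k, ∑ l, ξ k l * (fderiv ℂ F z 1 k) * (starRingEnd ℂ) (fderiv ℂ F z 1 l) * (-2 * I))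
        / ((Real.pi * R ^ 2 * ‖v‖ ^ 2 : ℝ) : ℂ)
      = -2 * I * (∑ k, ∑ l, v k * ξ k l * (starRingEnd ℂ) (v l)) / ((‖v‖ ^ 2 : ℝ) : ℂ) := by
  have hFeq : F = fun z => z • v + c := by
    funext z; ext j; simpa using hF z j
  have hderiv : ∀ z : ℂ, fderiv ℂ F z 1 = v := by
    intro z
    have h : HasFDerivAt F ((1 : ℂ →L[ℂ] ℂ).smulRight v) z := by
      rw [hFeq]
      exact ((hasFDerivAt_id z).smul_const v).add_const c
    rw [h.fderiv]
    simp
  set S : ℂ := ∑ k, ∑ l, v k * ξ k l * (starRingEnd ℂ) (v l) with hS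
  have hint : (∫ z in Metric.ball (0 : ℂ) R,
      ∑ k, ∑ l, ξ k l * (fderiv ℂ F z 1 k) * (starRingEnd ℂ) (fderiv ℂ F z 1 l) * (-2 * I))
      = -2 * I * Real.pi * (R : ℂ) ^ 2 * S := by
    have : (∫ z in Metric.ball (0 : ℂ) R,
        ∑ k, ∑ l, ξ k l * (fderiv ℂ F z 1 k) * (starRingEnd ℂ) (fderiv ℂ F z 1 l) * (-2 * I))
        = ∫ _z in Metric.ball (0 : ℂ) R, (-2 * I * S) := by
      apply setIntegral_congr_fun measurableSet_ball
      intro z _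
      simp only [hderiv z, hS, Finset.mul_sum, Finset.sum_mul]
      congr 1; funext k; congr 1; funext l; ring
    rw [this, setIntegral_const, measureReal_def, Complex.volume_ball]
    rw [Complex.real_smul]
    have hvol : ((ENNReal.ofReal R ^ 2 * NNReal.pi).toReal : ℂ)
        = (Real.pi : ℂ) * (R : ℂ) ^ 2 := by
      rw [ENNReal.toReal_mul, ENNReal.toReal_pow, ENNReal.toReal_ofReal hR.le]
      rw [ENNReal.coe_toReal, NNReal.coe_real_pi]
      push_cast
      ring
    rw [hvol]; ring
  refine ⟨hint, ?_⟩
  rw [hint]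
  have hπ : (Real.pi : ℂ) ≠ 0 := by exact_mod_cast Real.pi_ne_zero
  have hR' : (R : ℂ) ≠ 0 := by exact_mod_cast hR.ne'
  have hv' : ((‖v‖ ^ 2 : ℝ) : ℂ) ≠ 0 := by
    simp [pow_eq_zero_iff, norm_eq_zero, hv]
  have hden : (Real.pi : ℂ) * (R : ℂ) ^ 2 * ((‖v‖ : ℂ)) ^ 2 ≠ 0 :=
    mul_ne_zero (mul_ne_zero hπ (pow_ne_zero _ hR')) (pow_ne_zero _ (by
      simpa using (norm_ne_zero_iff.mpr hv)))
  have hv'' : ((‖v‖ : ℂ)) ^ 2 ≠ 0 := pow_ne_zero _ (by simpa using (norm_ne_zero_iff.mpr hv))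
  push_cast
  rw [div_eq_div_iff hden hv'']
  ring
end

section
/- Let g be a holomorphic function on an open set containing the closed disc D(z_0, r). Then the image g(D(z_0, r)) contains some open disc of radius r·|g'(z_0)|/72. -/
open Metric Set Filter

/-- Bloch's theorem with constant 1/72: if `g` is holomorphic on an open set containing the
closed disc `D(z₀, r)`, then `g(D(z₀, r))` contains some open disc of radius
`r · |g'(z₀)| / 72`. -/
theorem bloch (g : ℂ → ℂ) (z₀ : ℂ) (r : ℝ) (hr : 0 < r)
    (V : Set ℂ) (hV : IsOpen V) (hsub : Metric.closedBall z₀ r ⊆ V)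
    (hg : DifferentiableOn ℂ g V) :
    ∃ w : ℂ, Metric.ball w (r * ‖deriv g z₀‖ / 72) ⊆ g '' Metric.closedBall z₀ r := by
  set m : ℝ := ‖deriv g z₀‖ with hm
  rcases eq_or_lt_of_le (norm_nonneg (deriv g z₀)) with hm0 | hm0
  · refine ⟨g z₀, ?_⟩
    have hme : m = 0 := hm.trans hm0.symm
    rw [hme, Metric.ball_eq_empty.2 (by norm_num : r * 0 / 72 ≤ 0)]
    exact Set.empty_subset _
  -- m > 0 case
  have hganl : AnalyticOnNhd ℂ g V := hg.analyticOnNhd hV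
  have hderiv_cont : ContinuousOn (deriv g) (closedBall z₀ r) :=
    (hganl.deriv.continuousOn).mono hsub
  set F : ℂ → ℝ := fun z => (r - dist z z₀) * ‖deriv g z‖ with hF
  have hFcont : ContinuousOn F (closedBall z₀ r) :=
    ((continuous_const.sub (continuous_id.dist continuous_const)).continuousOn).mul
      hderiv_cont.norm
  obtain ⟨a, haB, hamax⟩ := (isCompact_closedBall z₀ r).exists_isMaxOn
    ⟨z₀, mem_closedBall_self hr.le⟩ hFcont
  have hFa : r * m ≤ F a := by
    have := hamax (mem_closedBall_self hr.le)
    simpa [F, hm] using this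
  set t : ℝ := (r - dist a z₀) / 2 with ht
  set μ : ℝ := ‖deriv g a‖ with hμ
  have hFa2 : F a = 2 * t * μ := by simp only [hF, ht, hμ]; ring
  have htμ : r * m ≤ 2 * t * μ := hFa2 ▸ hFa
  have hrm : 0 < r * m := mul_pos hr hm0
  have ht0 : 0 < t := by
    rcases le_or_gt t 0 with h | h
    · nlinarith [norm_nonneg (deriv g a)]
    · exact h
  have hμ0 : 0 < μ := by nlinarith
  have hdaz : dist a z₀ = r - 2 * t := by simp [ht]; ring
  -- the ball around a stays in the closed ball, with margin
  have hball_sub : ball a t ⊆ closedBall z₀ r := fun z hz => by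
    have := dist_triangle z a z₀
    simp only [mem_ball] at hz
    simp only [mem_closedBall]
    nlinarith
  -- derivative bound on ball a t
  have hderiv_bound : ∀ z ∈ ball a t, ‖deriv g z‖ ≤ 2 * μ := by
    intro z hz
    have hzB : z ∈ closedBall z₀ r := hball_sub hz
    have hFz : F z ≤ 2 * t * μ := hFa2 ▸ hamax hzB
    have hdz : t ≤ r - dist z z₀ := by
      have := dist_triangle z a z₀
      simp only [mem_ball] at hz
      nlinarith
    have h1 : t * ‖deriv g z‖ ≤ (r - dist z z₀) * ‖deriv g z‖ :=
      mul_le_mul_of_nonneg_right hdz (norm_nonneg _)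
    have h2 : (r - dist z z₀) * ‖deriv g z‖ ≤ 2 * t * μ := hFz
    nlinarith
  have hdiff_ball : ∀ z ∈ ball a t, DifferentiableAt ℂ g z := fun z hz =>
    (hg.differentiableAt (hV.mem_nhds (hsub (hball_sub hz))))
  -- mean value estimate
  have hMVT : ∀ z ∈ ball a t, ‖g z - g a‖ ≤ 2 * μ * ‖z - a‖ := by
    intro z hz
    have haball : a ∈ ball a t := mem_ball_self ht0
    exact (convex_ball a t).norm_image_sub_le_of_norm_deriv_le hdiff_ball hderiv_bound haball hz
  -- the error term φ
  set c : ℂ := deriv g a with hc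
  set φ : ℂ → ℂ := fun z => g z - g a - c * (z - a) with hφ
  have hφa : φ a = 0 := by simp [φ]
  have hφdiff : DifferentiableOn ℂ φ (ball a t) := by
    intro z hz
    exact (((hdiff_ball z hz).sub_const (g a)).sub
      (((differentiableAt_id.sub_const a).const_mul c))).differentiableWithinAt
  have hφderiv : deriv φ a = 0 := by
    have h1 : HasDerivAt (fun z => g z - g a) (deriv g a) a :=
      ((hdiff_ball a (mem_ball_self ht0)).hasDerivAt).sub_const (g a)
    have h2 : HasDerivAt (fun z => c * (z - a)) c a := by
      simpa using ((hasDerivAt_id a).sub_const a).const_mul c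
    have h3 : HasDerivAt φ (deriv g a - c) a := h1.sub h2
    rw [h3.deriv]; simp [hc]
  have hφbound : ∀ z ∈ ball a t, ‖φ z‖ ≤ 3 * μ * ‖z - a‖ := by
    intro z hz
    have h1 : ‖φ z‖ ≤ ‖g z - g a‖ + ‖c * (z - a)‖ := norm_sub_le _ _
    have h2 : ‖c * (z - a)‖ = μ * ‖z - a‖ := by rw [norm_mul, hμ, hc]
    have h3 := hMVT z hz
    nlinarith [norm_nonneg (z - a)]
  -- Schwarz on ψ = dslope φ a
  set ψ : ℂ → ℂ := dslope φ a with hψ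
  have hψa : ψ a = 0 := by rw [hψ, dslope_same]; exact hφderiv
  have hψbound : ∀ z ∈ ball a t, ‖ψ z‖ ≤ 3 * μ := by
    intro z hz
    rcases eq_or_ne z a with rfl | hne
    · rw [hψa]; simp; positivity
    · rw [hψ, dslope_of_ne _ hne, slope_def_module, norm_smul, norm_inv, hφa, sub_zero]
      rw [inv_mul_le_iff₀ (by simpa [sub_eq_zero] using hne : (0:ℝ) < ‖z - a‖)]
      have := hφbound z hz
      nlinarith [norm_nonneg (z - a)]
  have hψdiff : DifferentiableOn ℂ ψ (ball a t) :=
    (Complex.differentiableOn_dslope (isOpen_ball.mem_nhds (mem_ball_self ht0))).mpr hφdiff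
  have hψSchwarz : ∀ z ∈ ball a t, ‖ψ z‖ ≤ 3 * μ / t * ‖z - a‖ := by
    intro z hz
    have key : ∀ ε > (0:ℝ), ‖ψ z‖ ≤ (3 * μ + ε) / t * ‖z - a‖ := by
      intro ε hε
      have hmaps : MapsTo ψ (ball a t) (ball (ψ a) (3 * μ + ε)) := by
        intro w hw
        rw [hψa, mem_ball, dist_zero_right]
        exact lt_of_le_of_lt (hψbound w hw) (by linarith)
      have := Complex.dist_le_div_mul_dist_of_mapsTo_ball hψdiff (hmaps.mono_right ball_subset_closedBall) hz
      rwa [hψa, dist_eq_norm, sub_zero, dist_eq_norm] at this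
    rcases eq_or_ne z a with rfl | hne
    · simp [hψa]
    · have hza : (0:ℝ) < ‖z - a‖ := by simpa [sub_eq_zero] using hne
      refine le_of_forall_pos_le_add fun ε hε => ?_
      have hδ : (0:ℝ) < ε * t / ‖z - a‖ := by positivity
      have h := key _ hδ
      have hza' : ‖z - a‖ ≠ 0 := by simpa using hza.ne'
      have heq : (3 * μ + ε * t / ‖z - a‖) / t * ‖z - a‖ = 3 * μ / t * ‖z - a‖ + ε := by
        field_simp
      linarith [heq ▸ h]
  have hφbound2 : ∀ z ∈ ball a t, ‖φ z‖ ≤ 3 * μ / t * ‖z - a‖ ^ 2 := by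
    intro z hz
    rcases eq_or_ne z a with rfl | hne
    · simp [hφa]
    · have hza : (0:ℝ) < ‖z - a‖ := by simpa [sub_eq_zero] using hne
      have h1 := hψSchwarz z hz
      rw [hψ, dslope_of_ne _ hne, slope_def_module, norm_smul, norm_inv, hφa, sub_zero,
        inv_mul_le_iff₀ hza] at h1
      calc ‖φ z‖ ≤ ‖z - a‖ * (3 * μ / t * ‖z - a‖) := h1
        _ = 3 * μ / t * ‖z - a‖ ^ 2 := by ring
  -- lower bound on the sphere of radius t/6
  set s : ℝ := t / 6 with hs
  have hs0 : 0 < s := by positivity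
  have hsphere : ∀ z ∈ sphere a s, μ * t / 12 ≤ ‖g z - g a‖ := by
    intro z hz
    rw [mem_sphere, dist_eq_norm] at hz
    have hzball : z ∈ ball a t := by
      rw [mem_ball, dist_eq_norm, hz]; rw [hs]; linarith
    have h1 := hφbound2 z hzball
    rw [hz] at h1
    have h2 : ‖c * (z - a)‖ = μ * s := by rw [norm_mul, hμ, hc, hz]
    have h3 : ‖c * (z - a)‖ - ‖φ z‖ ≤ ‖g z - g a‖ := by
      have h5 : ‖c * (z - a)‖ - ‖g z - g a‖ ≤ ‖c * (z - a) - (g z - g a)‖ :=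
        norm_sub_norm_le _ _
      have h6 : ‖φ z‖ = ‖c * (z - a) - (g z - g a)‖ := by
        simp only [hφ]
        rw [show g z - g a - c * (z - a) = -(c * (z - a) - (g z - g a)) by ring, norm_neg]
      linarith
    have h4 : 3 * μ / t * s ^ 2 = μ * t / 12 := by
      rw [hs]; field_simp; ring
    rw [h2] at h3
    rw [h4] at h1
    have : μ * s = μ * t / 6 := by rw [hs]; ring
    rw [this] at h3
    linarith
  -- apply the open mapping estimate
  have hsub2 : closedBall a s ⊆ closedBall z₀ r := fun z hz => by
    rw [mem_closedBall] at hz ⊢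
    have := dist_triangle z a z₀
    rw [hdaz] at this
    have : dist z z₀ ≤ s + (r - 2 * t) := by linarith
    rw [hs] at this
    linarith
  have hdcc : DiffContOnCl ℂ g (ball a s) := by
    apply DifferentiableOn.diffContOnCl
    rw [closure_ball a hs0.ne']
    exact hg.mono (Subset.trans hsub2 hsub)
  have hfreq : ∃ᶠ z in nhds a, g z ≠ g a := by
    by_contra hcon
    rw [Filter.not_frequently] at hcon
    push_neg at hcon
    have hc0 : c = 0 := by
      rw [hc, Filter.EventuallyEq.deriv_eq hcon, deriv_const]
    have : μ = 0 := by rw [hμ, hc0, norm_zero]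
    linarith
  have hmain := hdcc.ball_subset_image_closedBall hs0 hsphere hfreq
  refine ⟨g a, fun v hv => ?_⟩
  have hrad : r * m / 72 ≤ μ * t / 12 / 2 := by nlinarith
  have hv' : v ∈ ball (g a) (μ * t / 12 / 2) :=
    mem_ball.2 (lt_of_lt_of_le (mem_ball.1 hv) hrad)
  obtain ⟨z, hz1, hz2⟩ := hmain hv'
  exact ⟨z, hsub2 hz1, hz2⟩
end

section
/- Let X be a compact complex manifold with Hermitian form ω, and let f : ℂ → X be an entire curve. Suppose (T_s)_{s≥1} is a sequence of Ahlfors currents on X, each generated by a sequence of concentric holomorphic discs f|_{closed D_r} satisfying the length-area condition Length_ω(f(∂D_r))/Area_ω(f(D_r)) → 0, and suppose T_s converges weakly to a current T. Then T is itself an Ahlfors current generated by some sequence of concentric discs f|_{closed D_{r_k}} with r_k → ∞ and Length_ω(f(∂D_{r_k}))/Area_ω(f(D_{r_k})) → 0. -/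
open Filter Topology

/-- Abstract framework for Ahlfors currents of a fixed entire curve `f : ℂ → X`:
`Ω` is the (separable normed) space of smooth `(1,1)`-test forms on the compact manifold `X`,
`u r` is the mass-normalized integration current of the holomorphic disc `f|_{D̄_r}`
(a continuous functional of norm `≤ 1`), and `ratio r` is the length-area ratio
`Length_ω(f(∂D_r)) / Area_ω(f(D_r))`.  `T` is an Ahlfors current generated by concentric
discs if it is the weak limit of `u (r k)` along radii `r k → ∞` with `ratio (r k) → 0`. -/
def IsAhlforsCurrent {Ω : Type*} [NormedAddCommGroup Ω] [NormedSpace ℝ Ω]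
    (u : ℝ → Ω →L[ℝ] ℝ) (ratio : ℝ → ℝ) (T : Ω →L[ℝ] ℝ) : Prop :=
  ∃ r : ℕ → ℝ, Tendsto r atTop atTop ∧ Tendsto (fun k => ratio (r k)) atTop (𝓝 0) ∧
    ∀ η : Ω, Tendsto (fun k => u (r k) η) atTop (𝓝 (T η))

/-- Density extension: a uniformly bounded sequence of functionals converging to a bounded
functional on a dense sequence converges everywhere. -/
lemma dense_ext {Ω : Type*} [NormedAddCommGroup Ω] [NormedSpace ℝ Ω]
    (e : ℕ → Ω) (he : DenseRange e)
    (A : ℕ → Ω →L[ℝ] ℝ) (hA : ∀ k, ‖A k‖ ≤ 1)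
    (B : Ω →L[ℝ] ℝ) (hB : ‖B‖ ≤ 1)
    (h : ∀ n, Tendsto (fun k => A k (e n)) atTop (𝓝 (B (e n)))) :
    ∀ η, Tendsto (fun k => A k η) atTop (𝓝 (B η)) := by
  intro η
  rw [Metric.tendsto_atTop]
  intro ε hε
  obtain ⟨n, hn⟩ := Metric.denseRange_iff.1 he η (ε/3) (by linarith)
  obtain ⟨N, hN⟩ := (Metric.tendsto_atTop.1 (h n)) (ε/3) (by linarith)
  refine ⟨N, fun k hk => ?_⟩
  have hne : ‖η - e n‖ < ε/3 := by rw [← dist_eq_norm]; exact hn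
  have h1 : ‖A k η - A k (e n)‖ ≤ ε/3 := by
    rw [← map_sub]
    calc ‖A k (η - e n)‖ ≤ ‖A k‖ * ‖η - e n‖ := (A k).le_opNorm _
      _ ≤ 1 * (ε/3) := mul_le_mul (hA k) hne.le (norm_nonneg _) zero_le_one
      _ = ε/3 := one_mul _
  have h2 : ‖B (e n) - B η‖ ≤ ε/3 := by
    rw [← map_sub]
    calc ‖B (e n - η)‖ ≤ ‖B‖ * ‖e n - η‖ := B.le_opNorm _
      _ ≤ 1 * (ε/3) := by
          rw [norm_sub_rev]; exact mul_le_mul hB hne.le (norm_nonneg _) zero_le_one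
      _ = ε/3 := one_mul _
  have h3 : ‖A k (e n) - B (e n)‖ < ε/3 := by
    have := hN k hk; rwa [dist_eq_norm] at this
  have key : A k η - B η = (A k η - A k (e n)) + (A k (e n) - B (e n)) + (B (e n) - B η) := by
    ring
  have : ‖A k η - B η‖ < ε := by
    rw [key]
    calc ‖_ + _ + _‖ ≤ ‖A k η - A k (e n)‖ + ‖A k (e n) - B (e n)‖ + ‖B (e n) - B η‖ :=
        norm_add₃_le
      _ < ε := by linarith
  rwa [dist_eq_norm]

/-- A weak limit of Ahlfors currents of the same entire curve, produced by concentric discs,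
is again an Ahlfors current produced by concentric discs. -/
theorem stmt14 {Ω : Type*} [NormedAddCommGroup Ω] [NormedSpace ℝ Ω]
    [TopologicalSpace.SeparableSpace Ω]
    (u : ℝ → Ω →L[ℝ] ℝ) (ratio : ℝ → ℝ)
    (hmass : ∀ r, ‖u r‖ ≤ 1)
    (T : ℕ → Ω →L[ℝ] ℝ) (hT : ∀ s, IsAhlforsCurrent u ratio (T s))
    (Tlim : Ω →L[ℝ] ℝ) (hlim : ∀ η : Ω, Tendsto (fun s => T s η) atTop (𝓝 (Tlim η))) :
    IsAhlforsCurrent u ratio Tlim := by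
  -- norm bounds on limits
  have hTs : ∀ s, ‖T s‖ ≤ 1 := by
    intro s
    obtain ⟨r, -, -, hconv⟩ := hT s
    refine (T s).opNorm_le_bound zero_le_one fun η => ?_
    have := (hconv η).norm
    refine le_of_tendsto this (Eventually.of_forall fun k => ?_)
    calc ‖u (r k) η‖ ≤ ‖u (r k)‖ * ‖η‖ := (u (r k)).le_opNorm _
      _ ≤ 1 * ‖η‖ := mul_le_mul_of_nonneg_right (hmass _) (norm_nonneg _)
  have hTlim : ‖Tlim‖ ≤ 1 := by
    refine Tlim.opNorm_le_bound zero_le_one fun η => ?_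
    refine le_of_tendsto (hlim η).norm (Eventually.of_forall fun s => ?_)
    calc ‖T s η‖ ≤ ‖T s‖ * ‖η‖ := (T s).le_opNorm _
      _ ≤ 1 * ‖η‖ := mul_le_mul_of_nonneg_right (hTs s) (norm_nonneg _)
  -- dense sequence
  have : Nonempty Ω := ⟨0⟩
  set e : ℕ → Ω := TopologicalSpace.denseSeq Ω with he_def
  have he : DenseRange e := TopologicalSpace.denseRange_denseSeq Ω
  -- for each k choose s k with T (s k) close to Tlim on e 0, ..., e k
  have hsel : ∀ k : ℕ, ∃ s : ℕ,
      ∀ n ∈ Finset.range (k+1), |T s (e n) - Tlim (e n)| < 1/(k+1) := by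
    intro k
    have hev : ∀ᶠ s in atTop, ∀ n ∈ Finset.range (k+1),
        |T s (e n) - Tlim (e n)| < 1/(k+1) := by
      rw [eventually_all_finset]
      intro n _
      have := Metric.tendsto_atTop.1 (hlim (e n)) (1/(k+1)) (by positivity)
      obtain ⟨N, hN⟩ := this
      filter_upwards [eventually_ge_atTop N] with s hs
      have := hN s hs
      rwa [Real.dist_eq] at this
    exact hev.exists
  choose s hs using hsel
  -- for each k choose a radius
  have hrsel : ∀ k : ℕ, ∃ ρ : ℝ, (k : ℝ) ≤ ρ ∧ |ratio ρ| < 1/(k+1) ∧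
      ∀ n ∈ Finset.range (k+1), |u ρ (e n) - T (s k) (e n)| < 1/(k+1) := by
    intro k
    obtain ⟨r, hr1, hr2, hr3⟩ := hT (s k)
    have e1 : ∀ᶠ j in atTop, (k : ℝ) ≤ r j := hr1.eventually_ge_atTop _
    have e2 : ∀ᶠ j in atTop, |ratio (r j)| < 1/(k+1) := by
      have := Metric.tendsto_atTop.1 hr2 (1/(k+1)) (by positivity)
      obtain ⟨N, hN⟩ := this
      filter_upwards [eventually_ge_atTop N] with j hj
      have := hN j hj
      rwa [Real.dist_eq, sub_zero] at this
    have e3 : ∀ᶠ j in atTop, ∀ n ∈ Finset.range (k+1),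
        |u (r j) (e n) - T (s k) (e n)| < 1/(k+1) := by
      rw [eventually_all_finset]
      intro n _
      have := Metric.tendsto_atTop.1 (hr3 (e n)) (1/(k+1)) (by positivity)
      obtain ⟨N, hN⟩ := this
      filter_upwards [eventually_ge_atTop N] with j hj
      have := hN j hj
      rwa [Real.dist_eq] at this
    obtain ⟨j, hj1, hj2, hj3⟩ := (e1.and (e2.and e3)).exists
    exact ⟨r j, hj1, hj2, hj3⟩
  choose ρ hρ1 hρ2 hρ3 using hrsel
  refine ⟨ρ, ?_, ?_, ?_⟩
  · exact tendsto_atTop_mono hρ1 tendsto_natCast_atTop_atTop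
  · have hb : ∀ k : ℕ, ‖ratio (ρ k)‖ ≤ 1/(k+1) := fun k => by
      rw [Real.norm_eq_abs]; exact (hρ2 k).le
    exact squeeze_zero_norm hb (by simpa using tendsto_one_div_add_atTop_nhds_zero_nat (𝕜 := ℝ))
  · -- convergence on the dense family, then extend
    refine dense_ext e he (fun k => u (ρ k)) (fun k => hmass _) Tlim hTlim ?_
    intro n
    have hbound : ∀ᶠ k in atTop, ‖u (ρ k) (e n) - Tlim (e n)‖ ≤ 2/(k+1) := by
      filter_upwards [eventually_ge_atTop n] with k hk
      have hn1 : n ∈ Finset.range (k+1) := Finset.mem_range.2 (Nat.lt_succ_of_le hk)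
      have a1 := hρ3 k n hn1
      have a2 := hs k n hn1
      have : |u (ρ k) (e n) - Tlim (e n)| ≤
          |u (ρ k) (e n) - T (s k) (e n)| + |T (s k) (e n) - Tlim (e n)| := by
        have := abs_sub_abs_le_abs_sub (u (ρ k) (e n) - Tlim (e n)) 0
        calc |u (ρ k) (e n) - Tlim (e n)|
            = |(u (ρ k) (e n) - T (s k) (e n)) + (T (s k) (e n) - Tlim (e n))| := by ring_nf
          _ ≤ _ := abs_add_le _ _
      rw [Real.norm_eq_abs]
      calc |u (ρ k) (e n) - Tlim (e n)| ≤ _ := this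
        _ ≤ 1/(k+1) + 1/(k+1) := by linarith
        _ = 2/(k+1) := by ring
    have htz : Tendsto (fun k : ℕ => (2:ℝ)/(k+1)) atTop (𝓝 0) := by
      have := tendsto_one_div_add_atTop_nhds_zero_nat (𝕜 := ℝ)
      have h2 := this.const_mul (2:ℝ)
      simpa [mul_one_div, mul_zero, div_eq_mul_inv] using h2
    have := squeeze_zero_norm' hbound htz
    have heq : Tendsto (fun k => u (ρ k) (e n) - Tlim (e n)) atTop (𝓝 0) := this
    have := heq.add_const (Tlim (e n))
    simpa using this
end
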